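/- Let G be a real symmetric 4×4 matrix in emission form with det G < 0, let K = G⁻¹, and for distinct indices A, B define the angle θ_{AB} = arccos( −K_{AB} / (√(−K_{AA})·√(−K_{BB})) ). Then each θ_{AB} lies strictly between 0 and π, the angles of complementary pairs coincide: θ₁₂ = θ₃₄, θ₁₃ = θ₂₄, θ₂₃ = θ₁₄, and θ₁₂ + θ₁₃ + θ₂₃ = 2π. -/

import Mathlib

/-- The angle between the `A`-th and `B`-th natural vectors of emission coordinates,
computed from the covariant metric `K`:
`θ_{AB} = arccos(−K_{AB}/(√(−K_{AA})·√(−K_{BB})))`. -/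
noncomputable def emissionAngle (K : Matrix (Fin 4) (Fin 4) ℝ) (A B : Fin 4) : ℝ :=
  Real.arccos (-(K A B) / (Real.sqrt (-(K A A)) * Real.sqrt (-(K B B))))

open Real

private lemma arccos_bounds' {x : ℝ} (h1 : -1 < x) (h2 : x < 1) :
    0 < Real.arccos x ∧ Real.arccos x < Real.pi :=
  ⟨Real.arccos_pos.2 h2,
    lt_of_le_of_ne (Real.arccos_le_pi x) (fun h => by
      have := Real.arccos_eq_pi.1 h; linarith)⟩

private lemma sq_lt_of_diff {u v s : ℝ} (h : v^2 - u^2 = s) (hs : 0 < s) : u^2 < v^2 := by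
  linarith

private lemma div_bounds {u v : ℝ} (hv : 0 < v) (h : u^2 < v^2) :
    -1 < u / v ∧ u / v < 1 := by
  constructor
  · rw [lt_div_iff₀ hv]; nlinarith
  · rw [div_lt_one hv]; nlinarith

private lemma sqrt_neg_inv_mul {D u t : ℝ} (ht : 0 < t) (hD : t^2 = -D) (hu : 0 ≤ u) :
    Real.sqrt (-(D⁻¹ * u)) = Real.sqrt u / t := by
  have hDt : D = -(t^2) := by linarith
  have h1 : -(D⁻¹ * u) = (Real.sqrt u / t)^2 := by
    rw [div_pow, Real.sq_sqrt hu, hDt]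
    field_simp
  rw [h1, Real.sqrt_sq (by positivity)]

private lemma angle_eq {D u v w P t : ℝ} (ht : 0 < t) (hD : t^2 = -D)
    (hu : 0 ≤ u) (hv : 0 ≤ v) (hP : Real.sqrt u * Real.sqrt v = P) (hP0 : 0 < P) :
    Real.arccos (-(D⁻¹ * w) / (Real.sqrt (-(D⁻¹ * u)) * Real.sqrt (-(D⁻¹ * v))))
      = Real.arccos (w / P) := by
  have hDt : D = -(t^2) := by linarith
  rw [sqrt_neg_inv_mul ht hD hu, sqrt_neg_inv_mul ht hD hv]
  congr 1
  rw [div_mul_div_comm, hP, hDt]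
  field_simp

private lemma inv_formula (a b c d e f : ℝ)
    (hdet : (!![0,a,b,c;a,0,d,e;b,d,0,f;c,e,f,0] : Matrix (Fin 4) (Fin 4) ℝ).det ≠ 0) :
    (!![0,a,b,c;a,0,d,e;b,d,0,f;c,e,f,0] : Matrix (Fin 4) (Fin 4) ℝ)⁻¹
      = (c^2*d^2 - 2*b*c*d*e + b^2*e^2 - 2*a*c*d*f - 2*a*b*e*f + a^2*f^2)⁻¹ •
        !![2*d*e*f, a*f^2-c*d*f-b*e*f, b*e^2-c*d*e-a*e*f, c*d^2-b*d*e-a*d*f;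
           a*f^2-c*d*f-b*e*f, 2*b*c*f, c^2*d-b*c*e-a*c*f, b^2*e-b*c*d-a*b*f;
           b*e^2-c*d*e-a*e*f, c^2*d-b*c*e-a*c*f, 2*a*c*e, a^2*f-a*c*d-a*b*e;
           c*d^2-b*d*e-a*d*f, b^2*e-b*c*d-a*b*f, a^2*f-a*c*d-a*b*e, 2*a*b*d] := by
  have hD : (!![0,a,b,c;a,0,d,e;b,d,0,f;c,e,f,0] : Matrix (Fin 4) (Fin 4) ℝ).det
      = c^2*d^2 - 2*b*c*d*e + b^2*e^2 - 2*a*c*d*f - 2*a*b*e*f + a^2*f^2 := by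
    simp [Matrix.det_succ_row_zero, Fin.sum_univ_succ]
    simp [Fin.succAbove, Fin.lt_def]
    ring
  rw [hD] at hdet
  apply Matrix.inv_eq_right_inv
  rw [Matrix.mul_smul]
  rw [show (1 : Matrix (Fin 4) (Fin 4) ℝ) =
    (c^2*d^2 - 2*b*c*d*e + b^2*e^2 - 2*a*c*d*f - 2*a*b*e*f + a^2*f^2)⁻¹ •
    ((c^2*d^2 - 2*b*c*d*e + b^2*e^2 - 2*a*c*d*f - 2*a*b*e*f + a^2*f^2) • (1 : Matrix (Fin 4) (Fin 4) ℝ)) from by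
      rw [smul_smul, inv_mul_cancel₀ hdet, one_smul]]
  congr 1
  ext i j
  fin_cases i <;> fin_cases j <;>
    simp [Matrix.mul_apply, Fin.sum_univ_four, Matrix.one_apply] <;> ring

private lemma det_formula (a b c d e f : ℝ) :
    (!![0,a,b,c;a,0,d,e;b,d,0,f;c,e,f,0] : Matrix (Fin 4) (Fin 4) ℝ).det
      = c^2*d^2 - 2*b*c*d*e + b^2*e^2 - 2*a*c*d*f - 2*a*b*e*f + a^2*f^2 := by
  simp [Matrix.det_succ_row_zero, Fin.sum_univ_succ]
  simp [Fin.succAbove, Fin.lt_def]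
  ring

private lemma emissionAngle_comm {K : Matrix (Fin 4) (Fin 4) ℝ} (h : K.IsSymm)
    (A B : Fin 4) : emissionAngle K A B = emissionAngle K B A := by
  unfold emissionAngle
  rw [← h.apply B A, mul_comm]

set_option maxHeartbeats 1000000 in
private lemma aux2 (M : Matrix (Fin 4) (Fin 4) ℝ) (a b c d e f : ℝ)
    (ha : 0 < a) (hb : 0 < b) (hc : 0 < c) (hd : 0 < d) (he : 0 < e) (hf : 0 < f)
    (hyΔ : c^2*d^2 - 2*b*c*d*e + b^2*e^2 - 2*a*c*d*f - 2*a*b*e*f + a^2*f^2 < 0)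
    (hyK : M⁻¹ = (c^2*d^2 - 2*b*c*d*e + b^2*e^2 - 2*a*c*d*f - 2*a*b*e*f + a^2*f^2)⁻¹ •
        !![2*d*e*f, a*f^2-c*d*f-b*e*f, b*e^2-c*d*e-a*e*f, c*d^2-b*d*e-a*d*f;
           a*f^2-c*d*f-b*e*f, 2*b*c*f, c^2*d-b*c*e-a*c*f, b^2*e-b*c*d-a*b*f;
           b*e^2-c*d*e-a*e*f, c^2*d-b*c*e-a*c*f, 2*a*c*e, a^2*f-a*c*d-a*b*e;
           c*d^2-b*d*e-a*d*f, b^2*e-b*c*d-a*b*f, a^2*f-a*c*d-a*b*e, 2*a*b*d]) :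
    (∀ A B : Fin 4, A ≠ B →
        0 < emissionAngle M⁻¹ A B ∧ emissionAngle M⁻¹ A B < Real.pi)
    ∧ emissionAngle M⁻¹ 0 1 = emissionAngle M⁻¹ 2 3
    ∧ emissionAngle M⁻¹ 0 2 = emissionAngle M⁻¹ 1 3
    ∧ emissionAngle M⁻¹ 1 2 = emissionAngle M⁻¹ 0 3
    ∧ emissionAngle M⁻¹ 0 1 + emissionAngle M⁻¹ 0 2 + emissionAngle M⁻¹ 1 2
        = 2 * Real.pi := by
  set Δ : ℝ := c^2*d^2 - 2*b*c*d*e + b^2*e^2 - 2*a*c*d*f - 2*a*b*e*f + a^2*f^2 with hΔdef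
  have hΔ : Δ < 0 := hyΔ
  have hK : M⁻¹ = Δ⁻¹ •
        !![2*d*e*f, a*f^2-c*d*f-b*e*f, b*e^2-c*d*e-a*e*f, c*d^2-b*d*e-a*d*f;
           a*f^2-c*d*f-b*e*f, 2*b*c*f, c^2*d-b*c*e-a*c*f, b^2*e-b*c*d-a*b*f;
           b*e^2-c*d*e-a*e*f, c^2*d-b*c*e-a*c*f, 2*a*c*e, a^2*f-a*c*d-a*b*e;
           c*d^2-b*d*e-a*d*f, b^2*e-b*c*d-a*b*f, a^2*f-a*c*d-a*b*e, 2*a*b*d] := hyK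
  -- entries of the inverse
  have k00 : M⁻¹ 0 0 = Δ⁻¹ * (2*d*e*f) := by rw [hK]; simp
  have k11 : M⁻¹ 1 1 = Δ⁻¹ * (2*b*c*f) := by rw [hK]; simp
  have k22 : M⁻¹ 2 2 = Δ⁻¹ * (2*a*c*e) := by rw [hK]; simp
  have k33 : M⁻¹ 3 3 = Δ⁻¹ * (2*a*b*d) := by rw [hK]; simp
  have k01 : M⁻¹ 0 1 = Δ⁻¹ * (a*f^2-c*d*f-b*e*f) := by rw [hK]; simp
  have k02 : M⁻¹ 0 2 = Δ⁻¹ * (b*e^2-c*d*e-a*e*f) := by rw [hK]; simp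
  have k03 : M⁻¹ 0 3 = Δ⁻¹ * (c*d^2-b*d*e-a*d*f) := by rw [hK]; simp
  have k12 : M⁻¹ 1 2 = Δ⁻¹ * (c^2*d-b*c*e-a*c*f) := by rw [hK]; simp
  have k13 : M⁻¹ 1 3 = Δ⁻¹ * (b^2*e-b*c*d-a*b*f) := by rw [hK]; simp
  have k23 : M⁻¹ 2 3 = Δ⁻¹ * (a^2*f-a*c*d-a*b*e) := by rw [hK]; simp
  have hKsym : (M⁻¹).IsSymm := by
    rw [hK, Matrix.IsSymm, Matrix.transpose_smul]
    congr 1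
    ext i j
    fin_cases i <;> fin_cases j <;> rfl
  -- square roots
  set t : ℝ := Real.sqrt (-Δ) with htdef
  have ht2 : t^2 = -Δ := Real.sq_sqrt (by linarith)
  have ht0 : 0 < t := Real.sqrt_pos.2 (by linarith)
  set p : ℝ := Real.sqrt (b*c*d*e) with hpdef
  have hp2 : p^2 = b*c*d*e := Real.sq_sqrt (by positivity)
  have hp0 : 0 < p := Real.sqrt_pos.2 (by positivity)
  set q : ℝ := Real.sqrt (a*c*d*f) with hqdef
  have hq2 : q^2 = a*c*d*f := Real.sq_sqrt (by positivity)
  have hq0 : 0 < q := Real.sqrt_pos.2 (by positivity)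
  set r : ℝ := Real.sqrt (a*b*e*f) with hrdef
  have hr2 : r^2 = a*b*e*f := Real.sq_sqrt (by positivity)
  have hr0 : 0 < r := Real.sqrt_pos.2 (by positivity)
  have hpq : p * q = c * d * r := by
    rw [hpdef, hqdef, hrdef, ← Real.sqrt_mul (by positivity),
      show (b*c*d*e)*(a*c*d*f) = (c*d)^2*(a*b*e*f) by ring,
      Real.sqrt_mul (by positivity), Real.sqrt_sq (by positivity)]
  -- products of sqrts of diagonal cofactors
  have hP01 : Real.sqrt (2*d*e*f) * Real.sqrt (2*b*c*f) = 2*f*p := by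
    rw [← Real.sqrt_mul (by positivity), show (2*d*e*f)*(2*b*c*f) = (2*f)^2*(b*c*d*e) by ring,
      Real.sqrt_mul (by positivity), Real.sqrt_sq (by positivity), hpdef]
  have hP02 : Real.sqrt (2*d*e*f) * Real.sqrt (2*a*c*e) = 2*e*q := by
    rw [← Real.sqrt_mul (by positivity), show (2*d*e*f)*(2*a*c*e) = (2*e)^2*(a*c*d*f) by ring,
      Real.sqrt_mul (by positivity), Real.sqrt_sq (by positivity), hqdef]
  have hP03 : Real.sqrt (2*d*e*f) * Real.sqrt (2*a*b*d) = 2*d*r := by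
    rw [← Real.sqrt_mul (by positivity), show (2*d*e*f)*(2*a*b*d) = (2*d)^2*(a*b*e*f) by ring,
      Real.sqrt_mul (by positivity), Real.sqrt_sq (by positivity), hrdef]
  have hP12 : Real.sqrt (2*b*c*f) * Real.sqrt (2*a*c*e) = 2*c*r := by
    rw [← Real.sqrt_mul (by positivity), show (2*b*c*f)*(2*a*c*e) = (2*c)^2*(a*b*e*f) by ring,
      Real.sqrt_mul (by positivity), Real.sqrt_sq (by positivity), hrdef]
  have hP13 : Real.sqrt (2*b*c*f) * Real.sqrt (2*a*b*d) = 2*b*q := by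
    rw [← Real.sqrt_mul (by positivity), show (2*b*c*f)*(2*a*b*d) = (2*b)^2*(a*c*d*f) by ring,
      Real.sqrt_mul (by positivity), Real.sqrt_sq (by positivity), hqdef]
  have hP23 : Real.sqrt (2*a*c*e) * Real.sqrt (2*a*b*d) = 2*a*p := by
    rw [← Real.sqrt_mul (by positivity), show (2*a*c*e)*(2*a*b*d) = (2*a)^2*(b*c*d*e) by ring,
      Real.sqrt_mul (by positivity), Real.sqrt_sq (by positivity), hpdef]
  -- angle values
  have hA01 : emissionAngle M⁻¹ 0 1 = Real.arccos ((a*f^2-c*d*f-b*e*f) / (2*f*p)) := by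
    unfold emissionAngle
    rw [k00, k11, k01]
    exact angle_eq ht0 ht2 (by positivity) (by positivity) hP01 (by positivity)
  have hA02 : emissionAngle M⁻¹ 0 2 = Real.arccos ((b*e^2-c*d*e-a*e*f) / (2*e*q)) := by
    unfold emissionAngle
    rw [k00, k22, k02]
    exact angle_eq ht0 ht2 (by positivity) (by positivity) hP02 (by positivity)
  have hA03 : emissionAngle M⁻¹ 0 3 = Real.arccos ((c*d^2-b*d*e-a*d*f) / (2*d*r)) := by
    unfold emissionAngle
    rw [k00, k33, k03]
    exact angle_eq ht0 ht2 (by positivity) (by positivity) hP03 (by positivity)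
  have hA12 : emissionAngle M⁻¹ 1 2 = Real.arccos ((c^2*d-b*c*e-a*c*f) / (2*c*r)) := by
    unfold emissionAngle
    rw [k11, k22, k12]
    exact angle_eq ht0 ht2 (by positivity) (by positivity) hP12 (by positivity)
  have hA13 : emissionAngle M⁻¹ 1 3 = Real.arccos ((b^2*e-b*c*d-a*b*f) / (2*b*q)) := by
    unfold emissionAngle
    rw [k11, k33, k13]
    exact angle_eq ht0 ht2 (by positivity) (by positivity) hP13 (by positivity)
  have hA23 : emissionAngle M⁻¹ 2 3 = Real.arccos ((a^2*f-a*c*d-a*b*e) / (2*a*p)) := by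
    unfold emissionAngle
    rw [k22, k33, k23]
    exact angle_eq ht0 ht2 (by positivity) (by positivity) hP23 (by positivity)
  -- strict bounds on the arguments (Jacobi identities)
  have j01 : (2*f*p)^2 - (a*f^2-c*d*f-b*e*f)^2 = t^2 * f^2 := by
    rw [ht2, hΔdef]; linear_combination (4*f^2) * hp2
  have j02 : (2*e*q)^2 - (b*e^2-c*d*e-a*e*f)^2 = t^2 * e^2 := by
    rw [ht2, hΔdef]; linear_combination (4*e^2) * hq2
  have j03 : (2*d*r)^2 - (c*d^2-b*d*e-a*d*f)^2 = t^2 * d^2 := by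
    rw [ht2, hΔdef]; linear_combination (4*d^2) * hr2
  have j12 : (2*c*r)^2 - (c^2*d-b*c*e-a*c*f)^2 = t^2 * c^2 := by
    rw [ht2, hΔdef]; linear_combination (4*c^2) * hr2
  have j13 : (2*b*q)^2 - (b^2*e-b*c*d-a*b*f)^2 = t^2 * b^2 := by
    rw [ht2, hΔdef]; linear_combination (4*b^2) * hq2
  have j23 : (2*a*p)^2 - (a^2*f-a*c*d-a*b*e)^2 = t^2 * a^2 := by
    rw [ht2, hΔdef]; linear_combination (4*a^2) * hp2
  have b01 := div_bounds (by positivity : (0:ℝ) < 2*f*p) (sq_lt_of_diff j01 (by positivity))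
  have b02 := div_bounds (by positivity : (0:ℝ) < 2*e*q) (sq_lt_of_diff j02 (by positivity))
  have b03 := div_bounds (by positivity : (0:ℝ) < 2*d*r) (sq_lt_of_diff j03 (by positivity))
  have b12 := div_bounds (by positivity : (0:ℝ) < 2*c*r) (sq_lt_of_diff j12 (by positivity))
  have b13 := div_bounds (by positivity : (0:ℝ) < 2*b*q) (sq_lt_of_diff j13 (by positivity))
  have b23 := div_bounds (by positivity : (0:ℝ) < 2*a*p) (sq_lt_of_diff j23 (by positivity))
  refine ⟨?_, ?_, ?_, ?_, ?_⟩
  · intro A B hAB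
    have s01 := arccos_bounds' b01.1 b01.2
    have s02 := arccos_bounds' b02.1 b02.2
    have s03 := arccos_bounds' b03.1 b03.2
    have s12 := arccos_bounds' b12.1 b12.2
    have s13 := arccos_bounds' b13.1 b13.2
    have s23 := arccos_bounds' b23.1 b23.2
    fin_cases A <;> fin_cases B
    · exact absurd rfl hAB
    · show 0 < emissionAngle M⁻¹ 0 1 ∧ emissionAngle M⁻¹ 0 1 < Real.pi
      rw [hA01]; exact s01
    · show 0 < emissionAngle M⁻¹ 0 2 ∧ emissionAngle M⁻¹ 0 2 < Real.pi
      rw [hA02]; exact s02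
    · show 0 < emissionAngle M⁻¹ 0 3 ∧ emissionAngle M⁻¹ 0 3 < Real.pi
      rw [hA03]; exact s03
    · show 0 < emissionAngle M⁻¹ 1 0 ∧ emissionAngle M⁻¹ 1 0 < Real.pi
      rw [emissionAngle_comm hKsym 1 0, hA01]; exact s01
    · exact absurd rfl hAB
    · show 0 < emissionAngle M⁻¹ 1 2 ∧ emissionAngle M⁻¹ 1 2 < Real.pi
      rw [hA12]; exact s12
    · show 0 < emissionAngle M⁻¹ 1 3 ∧ emissionAngle M⁻¹ 1 3 < Real.pi
      rw [hA13]; exact s13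
    · show 0 < emissionAngle M⁻¹ 2 0 ∧ emissionAngle M⁻¹ 2 0 < Real.pi
      rw [emissionAngle_comm hKsym 2 0, hA02]; exact s02
    · show 0 < emissionAngle M⁻¹ 2 1 ∧ emissionAngle M⁻¹ 2 1 < Real.pi
      rw [emissionAngle_comm hKsym 2 1, hA12]; exact s12
    · exact absurd rfl hAB
    · show 0 < emissionAngle M⁻¹ 2 3 ∧ emissionAngle M⁻¹ 2 3 < Real.pi
      rw [hA23]; exact s23
    · show 0 < emissionAngle M⁻¹ 3 0 ∧ emissionAngle M⁻¹ 3 0 < Real.pi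
      rw [emissionAngle_comm hKsym 3 0, hA03]; exact s03
    · show 0 < emissionAngle M⁻¹ 3 1 ∧ emissionAngle M⁻¹ 3 1 < Real.pi
      rw [emissionAngle_comm hKsym 3 1, hA13]; exact s13
    · show 0 < emissionAngle M⁻¹ 3 2 ∧ emissionAngle M⁻¹ 3 2 < Real.pi
      rw [emissionAngle_comm hKsym 3 2, hA23]; exact s23
    · exact absurd rfl hAB
  · rw [hA01, hA23]
    congr 1
    rw [div_eq_div_iff (by positivity) (by positivity)]
    ring
  · rw [hA02, hA13]
    congr 1
    rw [div_eq_div_iff (by positivity) (by positivity)]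
    ring
  · rw [hA12, hA03]
    congr 1
    rw [div_eq_div_iff (by positivity) (by positivity)]
    ring
  · -- sum of angles
    rw [hA01, hA02, hA12]
    set x : ℝ := (a*f^2-c*d*f-b*e*f) / (2*f*p) with hx
    set y : ℝ := (b*e^2-c*d*e-a*e*f) / (2*e*q) with hy
    set z : ℝ := (c^2*d-b*c*e-a*c*f) / (2*c*r) with hz
    set α : ℝ := Real.arccos x with hα
    set β : ℝ := Real.arccos y with hβ
    set γ : ℝ := Real.arccos z with hγ
    have hcα : Real.cos α = x := Real.cos_arccos b01.1.le b01.2.le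
    have hcβ : Real.cos β = y := Real.cos_arccos b02.1.le b02.2.le
    have hcγ : Real.cos γ = z := Real.cos_arccos b12.1.le b12.2.le
    have hsx : 1 - x^2 = (t/(2*p))^2 := by
      rw [hx]
      field_simp
      apply mul_left_cancel₀ (pow_ne_zero 2 (hf.ne' : f ≠ 0))
      linear_combination j01

    have hsy : 1 - y^2 = (t/(2*q))^2 := by
      rw [hy]
      field_simp
      apply mul_left_cancel₀ (pow_ne_zero 2 (he.ne' : e ≠ 0))
      linear_combination j02

    have hsz : 1 - z^2 = (t/(2*r))^2 := by
      rw [hz]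
      field_simp
      apply mul_left_cancel₀ (pow_ne_zero 2 (hc.ne' : c ≠ 0))
      linear_combination j12

    have hsα : Real.sin α = t/(2*p) := by
      rw [hα, Real.sin_arccos, hsx, Real.sqrt_sq (by positivity)]
    have hsβ : Real.sin β = t/(2*q) := by
      rw [hβ, Real.sin_arccos, hsy, Real.sqrt_sq (by positivity)]
    have hsγ : Real.sin γ = t/(2*r) := by
      rw [hγ, Real.sin_arccos, hsz, Real.sqrt_sq (by positivity)]
    have hT : t^2 = -(c^2*d^2 - 2*b*c*d*e + b^2*e^2 - 2*a*c*d*f - 2*a*b*e*f + a^2*f^2) := by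
      rw [ht2, hΔdef]
    have hcos_sum : Real.cos (α + β) = Real.cos γ := by
      rw [Real.cos_add, hcα, hcβ, hcγ, hsα, hsβ, hx, hy, hz]
      field_simp
      linear_combination (-r) * hT - (2*(c*d-b*e-a*f)) * hpq

    have hsin_sum : Real.sin (α + β) = -Real.sin γ := by
      rw [Real.sin_add, hcα, hcβ, hsα, hsβ, hsγ, hx, hy]
      field_simp
      linear_combination 2 * hpq

    have aα := arccos_bounds' b01.1 b01.2
    have aβ := arccos_bounds' b02.1 b02.2
    have aγ := arccos_bounds' b12.1 b12.2
    have hsinγ : 0 < Real.sin γ := Real.sin_pos_of_pos_of_lt_pi aγ.1 aγ.2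
    have hgt : Real.pi < α + β := by
      by_contra h
      push_neg at h
      have h0 : 0 ≤ Real.sin (α + β) :=
        Real.sin_nonneg_of_nonneg_of_le_pi (by linarith [aα.1, aβ.1]) h
      rw [hsin_sum] at h0
      linarith
    have hcos2 : Real.cos (2 * Real.pi - (α + β)) = Real.cos γ := by
      rw [Real.cos_sub, Real.cos_two_pi, Real.sin_two_pi, one_mul, zero_mul, add_zero, hcos_sum]
    have hkey : 2 * Real.pi - (α + β) = γ :=
      Real.injOn_cos ⟨by linarith [aα.2, aβ.2], by linarith⟩ ⟨aγ.1.le, aγ.2.le⟩ hcos2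
    linarith


private lemma aux (a b c d e f : ℝ) (ha : 0 < a) (hb : 0 < b) (hc : 0 < c)
    (hd : 0 < d) (he : 0 < e) (hf : 0 < f)
    (hdet : (!![0,a,b,c;a,0,d,e;b,d,0,f;c,e,f,0] : Matrix (Fin 4) (Fin 4) ℝ).det < 0) :
    (∀ A B : Fin 4, A ≠ B →
        0 < emissionAngle (!![0,a,b,c;a,0,d,e;b,d,0,f;c,e,f,0] : Matrix (Fin 4) (Fin 4) ℝ)⁻¹ A B ∧
          emissionAngle (!![0,a,b,c;a,0,d,e;b,d,0,f;c,e,f,0] : Matrix (Fin 4) (Fin 4) ℝ)⁻¹ A B < Real.pi)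
    ∧ emissionAngle (!![0,a,b,c;a,0,d,e;b,d,0,f;c,e,f,0] : Matrix (Fin 4) (Fin 4) ℝ)⁻¹ 0 1
        = emissionAngle (!![0,a,b,c;a,0,d,e;b,d,0,f;c,e,f,0] : Matrix (Fin 4) (Fin 4) ℝ)⁻¹ 2 3
    ∧ emissionAngle (!![0,a,b,c;a,0,d,e;b,d,0,f;c,e,f,0] : Matrix (Fin 4) (Fin 4) ℝ)⁻¹ 0 2
        = emissionAngle (!![0,a,b,c;a,0,d,e;b,d,0,f;c,e,f,0] : Matrix (Fin 4) (Fin 4) ℝ)⁻¹ 1 3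
    ∧ emissionAngle (!![0,a,b,c;a,0,d,e;b,d,0,f;c,e,f,0] : Matrix (Fin 4) (Fin 4) ℝ)⁻¹ 1 2
        = emissionAngle (!![0,a,b,c;a,0,d,e;b,d,0,f;c,e,f,0] : Matrix (Fin 4) (Fin 4) ℝ)⁻¹ 0 3
    ∧ emissionAngle (!![0,a,b,c;a,0,d,e;b,d,0,f;c,e,f,0] : Matrix (Fin 4) (Fin 4) ℝ)⁻¹ 0 1
        + emissionAngle (!![0,a,b,c;a,0,d,e;b,d,0,f;c,e,f,0] : Matrix (Fin 4) (Fin 4) ℝ)⁻¹ 0 2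
        + emissionAngle (!![0,a,b,c;a,0,d,e;b,d,0,f;c,e,f,0] : Matrix (Fin 4) (Fin 4) ℝ)⁻¹ 1 2
        = 2 * Real.pi := by
  have hΔ : c^2*d^2 - 2*b*c*d*e + b^2*e^2 - 2*a*c*d*f - 2*a*b*e*f + a^2*f^2 < 0 := by
    rw [det_formula] at hdet; exact hdet
  exact aux2 _ a b c d e f ha hb hc hd he hf hΔ
    (inv_formula a b c d e f (by rw [det_formula]; exact ne_of_lt hΔ))

set_option maxHeartbeats 1000000 in
/-- For a real symmetric 4×4 matrix `G` in emission form with `det G < 0`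
and `K = G⁻¹`, the angles `θ_{AB}` lie strictly between `0` and `π`, angles of
complementary pairs coincide (`θ₁₂ = θ₃₄`, `θ₁₃ = θ₂₄`, `θ₂₃ = θ₁₄`), and
`θ₁₂ + θ₁₃ + θ₂₃ = 2π`. -/
theorem stmt_13 (G : Matrix (Fin 4) (Fin 4) ℝ)
    (hsymm : G.IsSymm) (hdiag : ∀ i, G i i = 0)
    (hpos : ∀ i j, i ≠ j → 0 < G i j) (hdet : G.det < 0) :
    (∀ A B : Fin 4, A ≠ B →
        0 < emissionAngle G⁻¹ A B ∧ emissionAngle G⁻¹ A B < Real.pi)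
    ∧ emissionAngle G⁻¹ 0 1 = emissionAngle G⁻¹ 2 3
    ∧ emissionAngle G⁻¹ 0 2 = emissionAngle G⁻¹ 1 3
    ∧ emissionAngle G⁻¹ 1 2 = emissionAngle G⁻¹ 0 3
    ∧ emissionAngle G⁻¹ 0 1 + emissionAngle G⁻¹ 0 2 + emissionAngle G⁻¹ 1 2
        = 2 * Real.pi := by
  have hGm : G = !![0, G 0 1, G 0 2, G 0 3;
                    G 0 1, 0, G 1 2, G 1 3;
                    G 0 2, G 1 2, 0, G 2 3;
                    G 0 3, G 1 3, G 2 3, 0] := by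
    ext i j
    fin_cases i <;> fin_cases j <;>
      simp <;>
        first
          | exact hdiag _
          | exact hsymm.apply _ _
  rw [hGm] at hdet ⊢
  exact aux (G 0 1) (G 0 2) (G 0 3) (G 1 2) (G 1 3) (G 2 3)
    (hpos 0 1 (by decide)) (hpos 0 2 (by decide)) (hpos 0 3 (by decide))
    (hpos 1 2 (by decide)) (hpos 1 3 (by decide)) (hpos 2 3 (by decide)) hdet
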